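/- Let χ : A⊗K³ → K³⊗A be a twisting map given by χ(a⊗e_j) = Σ_{i=1}^3 e_i⊗γ_j^i(a), and suppose the map Θ : A⊗K² → K²⊗A defined by Θ(a⊗e_j) = e_1⊗γ_j^1(a) + e_2⊗γ_j^2(a) for j ∈ {1,2} is also a twisting map. Then γ_3^1 = 0 and γ_3^2 = 0. -/
import Mathlib


open TensorProduct LinearMap

variable (K : Type*)

def IsTwistingMap {A B : Type*} [Field K] [Ring A] [Ring B] [Algebra K A] [Algebra K B]
    (χ : A ⊗[K] B →ₗ[K] B ⊗[K] A) : Prop :=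
  (∀ b : B, χ ((1 : A) ⊗ₜ[K] b) = b ⊗ₜ[K] (1 : A)) ∧
  (∀ a : A, χ (a ⊗ₜ[K] (1 : B)) = (1 : B) ⊗ₜ[K] a) ∧
  (∀ (a a' : A) (b : B),
    χ ((a * a') ⊗ₜ[K] b) =
      lTensor B (mul' K A)
        (TensorProduct.assoc K B A A
          (rTensor A χ
            ((TensorProduct.assoc K A B A).symm (a ⊗ₜ[K] χ (a' ⊗ₜ[K] b)))))) ∧
  (∀ (a : A) (b b' : B),
    χ (a ⊗ₜ[K] (b * b')) =
      rTensor A (mul' K B)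
        ((TensorProduct.assoc K B B A).symm
          (lTensor B χ
            (TensorProduct.assoc K B A B (χ (a ⊗ₜ[K] b) ⊗ₜ[K] b')))))

noncomputable def twistMul {A B : Type*} [Field K] [Ring A] [Ring B] [Algebra K A] [Algebra K B]
    (χ : A ⊗[K] B →ₗ[K] B ⊗[K] A) :
    (B ⊗[K] A) ⊗[K] (B ⊗[K] A) →ₗ[K] B ⊗[K] A :=
  TensorProduct.map (mul' K B) (mul' K A)
    ∘ₗ (TensorProduct.assoc K B B (A ⊗[K] A)).symm.toLinearMap
    ∘ₗ lTensor B (TensorProduct.assoc K B A A).toLinearMap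
    ∘ₗ lTensor B (rTensor A χ)
    ∘ₗ lTensor B (TensorProduct.assoc K A B A).symm.toLinearMap
    ∘ₗ (TensorProduct.assoc K B A (B ⊗[K] A)).toLinearMap

theorem K3_extension_of_K2 {A : Type*} [Field K] [Ring A] [Algebra K A]
    (χ : A ⊗[K] (Fin 3 → K) →ₗ[K] (Fin 3 → K) ⊗[K] A)
    (γ : Fin 3 → Fin 3 → (A →ₗ[K] A))
    (hχ : ∀ (a : A) (j : Fin 3),
      χ (a ⊗ₜ[K] Pi.single j (1 : K)) =
        ∑ i : Fin 3, (Pi.single i (1 : K) : Fin 3 → K) ⊗ₜ[K] γ j i a)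
    (hχtw : IsTwistingMap K χ)
    (Θ : A ⊗[K] (Fin 2 → K) →ₗ[K] (Fin 2 → K) ⊗[K] A)
    (hΘ : ∀ (a : A) (j : Fin 2),
      Θ (a ⊗ₜ[K] Pi.single j (1 : K)) =
        ∑ i : Fin 2, (Pi.single i (1 : K) : Fin 2 → K) ⊗ₜ[K]
          γ (Fin.castLE (by norm_num) j) (Fin.castLE (by norm_num) i) a)
    (hΘtw : IsTwistingMap K Θ) :
    γ 2 0 = 0 ∧ γ 2 1 = 0 := by
  classical
  -- evaluation maps
  have h3 : ∀ (a : A) (i : Fin 3), ∑ j : Fin 3, γ j i a = a := by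
    intro a i
    have hone : (1 : Fin 3 → K) = ∑ j : Fin 3, Pi.single j (1 : K) := by
      funext x; simp [Finset.sum_apply, Pi.single_apply]
    have h := hχtw.2.1 a
    rw [hone, TensorProduct.tmul_sum, map_sum] at h
    simp_rw [hχ] at h
    have h' := congrArg ((TensorProduct.lid K A).toLinearMap ∘ₗ rTensor A (LinearMap.proj i : (_ →ₗ[K] K))) h
    simpa [map_sum, rTensor_tmul, proj_apply, TensorProduct.lid_tmul,
      Pi.single_apply, TensorProduct.sum_tmul, Finset.sum_ite_eq,
      Finset.sum_ite_eq'] using h'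
  have h2 : ∀ (a : A) (i : Fin 2), ∑ j : Fin 2,
      γ (Fin.castLE (by norm_num) j) (Fin.castLE (by norm_num) i) a = a := by
    intro a i
    have hone : (1 : Fin 2 → K) = ∑ j : Fin 2, Pi.single j (1 : K) := by
      funext x; simp [Finset.sum_apply, Pi.single_apply]
    have h := hΘtw.2.1 a
    rw [hone, TensorProduct.tmul_sum, map_sum] at h
    simp_rw [hΘ] at h
    have h' := congrArg ((TensorProduct.lid K A).toLinearMap ∘ₗ rTensor A (LinearMap.proj i : (_ →ₗ[K] K))) h
    fin_cases i <;>
    simpa [map_sum, rTensor_tmul, proj_apply, TensorProduct.lid_tmul,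
      Pi.single_apply, TensorProduct.sum_tmul, Finset.sum_ite_eq,
      Finset.sum_ite_eq', Fin.sum_univ_two, Fin.sum_univ_three] using h'
  constructor <;> ext a
  · have e3 := h3 a 0
    have e2 := h2 a 0
    rw [Fin.sum_univ_three] at e3
    rw [Fin.sum_univ_two] at e2
    have e2' : γ 0 0 a + γ 1 0 a = a := by
      rw [← e2]; congr 1 <;> congr 1 <;> decide
    have h := e3.trans e2'.symm
    exact add_left_cancel (h.trans (add_zero _).symm)
  · have e3 := h3 a 1
    have e2 := h2 a 1
    rw [Fin.sum_univ_three] at e3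
    rw [Fin.sum_univ_two] at e2
    have e2' : γ 0 1 a + γ 1 1 a = a := by
      rw [← e2]; congr 1 <;> congr 1 <;> decide
    have h := e3.trans e2'.symm
    exact add_left_cancel (h.trans (add_zero _).symm)
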